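/- In the Loidreau–Overbeck setting, assume rk_F(λ_(n−t−k)(E)_a⃗) = t. Then the decoding matrix satisfies rk_F(L) = n − 1. -/

import Mathlib

namespace Stmt5

/-- `genNorm σ a i = σ^(i-1)(a) ⋯ σ(a) · a`, the generalized power function `N_i(a)`. -/
def genNorm {F : Type} [Field F] (σ : F ≃+* F) (a : F) : ℕ → F
  | 0 => 1
  | i + 1 => (⇑σ)^[i] a * genNorm σ a i

/-- Generalized operator `D_a^i(b) = σ^i(b) · N_i(a)` for `i ∈ ℕ`. -/
def opev {F : Type} [Field F] (σ : F ≃+* F) (a b : F) (i : ℕ) : F :=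
  (⇑σ)^[i] b * genNorm σ a i

/-- `b` is σ-conjugate to `a`, i.e. `b = σ(c)·a·c⁻¹` for some nonzero `c`. -/
def SConj {F : Type} [Field F] (σ : F ≃+* F) (a b : F) : Prop :=
  ∃ c : F, c ≠ 0 ∧ b = σ c * a * c⁻¹

/-- σ-generalized Moore matrix `λ_d(x)_a⃗` w.r.t. the length partition `nn`:
its row `r` applies `D_{a_i}^r` entrywise to the `i`-th block of `x`. -/
def moore {F : Type} [Field F] (σ : F ≃+* F) {ℓ : ℕ} (nn : Fin ℓ → ℕ) (aa : Fin ℓ → F)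
    (d : ℕ) (x : (Σ i : Fin ℓ, Fin (nn i)) → F) :
    Matrix (Fin d) (Σ i : Fin ℓ, Fin (nn i)) F :=
  Matrix.of fun r p => opev σ (aa p.1) (x p) (r : ℕ)

/-- `λ_d(X)_a⃗` for a matrix `X`: the stack of `λ_d(x_j)_a⃗` over the rows of `X`. -/
def mooreMat {F : Type} [Field F] (σ : F ≃+* F) {ℓ : ℕ} (nn : Fin ℓ → ℕ) (aa : Fin ℓ → F)
    {s : ℕ} (d : ℕ) (X : Matrix (Fin s) (Σ i : Fin ℓ, Fin (nn i)) F) :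
    Matrix (Fin s × Fin d) (Σ i : Fin ℓ, Fin (nn i)) F :=
  Matrix.of fun r p => opev σ (aa p.1) (X r.1 p) (r.2 : ℕ)

/-- `rk_q` of a vector: the `K`-dimension of the `K`-span of its entries. -/
noncomputable def rkq (K : Type) [Field K] {F : Type} [Field F] [Algebra K F] {ι : Type}
    (v : ι → F) : ℕ :=
  Module.finrank K (Submodule.span K (Set.range v))

/-- `rk_q` of a matrix: the `K`-dimension of the `K`-span of its columns. -/
noncomputable def rkqMat (K : Type) [Field K] {F : Type} [Field F] [Algebra K F]
    {s : ℕ} {ι : Type} (X : Matrix (Fin s) ι F) : ℕ :=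
  Module.finrank K (Submodule.span K (Set.range fun j : ι => fun r : Fin s => X r j))

/-- Sum-rank weight of a blockwise vector. -/
noncomputable def wtV (K : Type) [Field K] {F : Type} [Field F] [Algebra K F] {ℓ : ℕ}
    (nn : Fin ℓ → ℕ) (x : (Σ i : Fin ℓ, Fin (nn i)) → F) : ℕ :=
  ∑ i, rkq K fun μ : Fin (nn i) => x ⟨i, μ⟩

/-- Sum-rank weight of a blockwise matrix. -/
noncomputable def wtM (K : Type) [Field K] {F : Type} [Field F] [Algebra K F] {s ℓ : ℕ}
    (nn : Fin ℓ → ℕ) (X : Matrix (Fin s) (Σ i : Fin ℓ, Fin (nn i)) F) : ℕ :=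
  ∑ i, rkqMat K (Matrix.of fun (r : Fin s) (μ : Fin (nn i)) => X r ⟨i, μ⟩)

/-- Codeword `C(M) = M · λ_k(β)_a⃗` of the `s`-interleaved linearized Reed–Solomon code. -/
def codeword {F : Type} [Field F] (σ : F ≃+* F) {ℓ : ℕ} (nn : Fin ℓ → ℕ) (aa : Fin ℓ → F)
    (β : (Σ i : Fin ℓ, Fin (nn i)) → F) {s : ℕ} (k : ℕ) (M : Matrix (Fin s) (Fin k) F) :
    Matrix (Fin s) (Σ i : Fin ℓ, Fin (nn i)) F :=
  M * moore σ nn aa k β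

/-- Loidreau–Overbeck decoding matrix: the stack of `λ_{n-t-1}(β)_a⃗` and
`λ_{n-t-k}(r_j)_a⃗` for the rows `r_j` of `R`. -/
def LOmat {F : Type} [Field F] (σ : F ≃+* F) {ℓ : ℕ} (nn : Fin ℓ → ℕ) (aa : Fin ℓ → F)
    (β : (Σ i : Fin ℓ, Fin (nn i)) → F) {s : ℕ}
    (R : Matrix (Fin s) (Σ i : Fin ℓ, Fin (nn i)) F) (n t k : ℕ) :
    Matrix (Fin (n - t - 1) ⊕ Fin s × Fin (n - t - k)) (Σ i : Fin ℓ, Fin (nn i)) F :=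
  Matrix.of fun r p =>
    match r with
    | Sum.inl u => opev σ (aa p.1) (β p) (u : ℕ)
    | Sum.inr ju => opev σ (aa p.1) (R ju.1 p) (ju.2 : ℕ)

section Helpers

variable {K F : Type} [Field K] [Field F] [Algebra K F] (σ : F ≃+* F)

lemma iter_mul (j : ℕ) (x y : F) : (⇑σ)^[j] (x * y) = (⇑σ)^[j] x * (⇑σ)^[j] y := by
  induction j generalizing x y with
  | zero => simp
  | succ n ih => simp [Function.iterate_succ_apply, map_mul, ih]

lemma iter_add (j : ℕ) (x y : F) : (⇑σ)^[j] (x + y) = (⇑σ)^[j] x + (⇑σ)^[j] y := by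
  induction j generalizing x y with
  | zero => simp
  | succ n ih => simp [Function.iterate_succ_apply, map_add, ih]

lemma iter_sub (j : ℕ) (x y : F) : (⇑σ)^[j] (x - y) = (⇑σ)^[j] x - (⇑σ)^[j] y := by
  induction j generalizing x y with
  | zero => simp
  | succ n ih => simp [Function.iterate_succ_apply, map_sub, ih]

lemma iter_zero (j : ℕ) : (⇑σ)^[j] (0 : F) = 0 := by
  induction j with
  | zero => simp
  | succ n ih => simp [Function.iterate_succ_apply, ih]

lemma iter_algebraMap (hσK : ∀ k : K, σ (algebraMap K F k) = algebraMap K F k) (j : ℕ) (k : K) :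
    (⇑σ)^[j] (algebraMap K F k) = algebraMap K F k := by
  induction j with
  | zero => simp
  | succ n ih => rw [Function.iterate_succ_apply, hσK, ih]

lemma iter_smul (hσK : ∀ k : K, σ (algebraMap K F k) = algebraMap K F k) (j : ℕ) (k : K) (x : F) :
    (⇑σ)^[j] (k • x) = k • (⇑σ)^[j] x := by
  rw [Algebra.smul_def, Algebra.smul_def, iter_mul, iter_algebraMap σ hσK]

/-- operator evaluation of the "polynomial" with coefficients `c` (degree `< D`). -/
def Phi (a : F) (c : ℕ → F) (D : ℕ) (x : F) : F :=
  ∑ m ∈ Finset.range D, c m * opev σ a x m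

lemma Phi_add (a : F) (c : ℕ → F) (D : ℕ) (x y : F) :
    Phi σ a c D (x + y) = Phi σ a c D x + Phi σ a c D y := by
  simp only [Phi, opev, ← Finset.sum_add_distrib]
  refine Finset.sum_congr rfl fun m _ => ?_
  rw [iter_add]; ring

lemma Phi_smul (hσK : ∀ k : K, σ (algebraMap K F k) = algebraMap K F k) (a : F) (c : ℕ → F) (D : ℕ) (k : K) (x : F) :
    Phi σ a c D (k • x) = k • Phi σ a c D x := by
  simp only [Phi, opev, Finset.smul_sum]
  refine Finset.sum_congr rfl fun m _ => ?_
  rw [iter_smul σ hσK, Algebra.smul_def, Algebra.smul_def]; ring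

lemma Phi_zero (a : F) (c : ℕ → F) (D : ℕ) : Phi σ a c D 0 = 0 := by
  simp [Phi, opev, iter_zero]

/-- `Phi` as a `K`-linear map. -/
def Lmap (hσK : ∀ k : K, σ (algebraMap K F k) = algebraMap K F k) (a : F) (c : ℕ → F) (D : ℕ) : F →ₗ[K] F where
  toFun := Phi σ a c D
  map_add' := Phi_add σ a c D
  map_smul' := Phi_smul σ hσK a c D

@[simp] lemma Lmap_apply (hσK : ∀ k : K, σ (algebraMap K F k) = algebraMap K F k) (a : F) (c : ℕ → F) (D : ℕ) (x : F) :
    Lmap σ hσK a c D x = Phi σ a c D x := rfl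

/-- the map `x ↦ σ(x)·a − a'·x`, kernel detects σ-conjugacy of `a'` to `a`. -/
def Umap (hσK : ∀ k : K, σ (algebraMap K F k) = algebraMap K F k) (a a' : F) : F →ₗ[K] F where
  toFun := fun x => σ x * a - a' * x
  map_add' := fun x y => by
    show σ (x + y) * a - a' * (x + y) = (σ x * a - a' * x) + (σ y * a - a' * y)
    rw [map_add]; ring
  map_smul' := fun k x => by
    show σ (k • x) * a - a' * (k • x) = k • (σ x * a - a' * x)
    simp only [Algebra.smul_def, map_mul, hσK]; ring

@[simp] lemma Umap_apply (hσK : ∀ k : K, σ (algebraMap K F k) = algebraMap K F k) (a a' x : F) : Umap σ hσK a a' x = σ x * a - a' * x := rfl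

end Helpers

section Division

variable {K F : Type} [Field K] [Field F] [Algebra K F] (σ : F ≃+* F)

def divAux (c : ℕ → F) (a' : F) (D : ℕ) : ℕ → F
  | 0 => 0
  | j + 1 => c (D - j) + divAux c a' D j * (⇑σ)^[D - j] a'

/-- quotient coefficients upon right division of `c` (deg ≤ D) by `x - a'`. -/
def gdiv (c : ℕ → F) (a' : F) (D j : ℕ) : F := divAux σ c a' D (D - j)

/-- remainder upon right division of `c` by `x - a'`. -/
def rdiv (c : ℕ → F) (a' : F) (D : ℕ) : F := c 0 + gdiv σ c a' D 0 * a'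

lemma gdiv_of_ge (c : ℕ → F) (a' : F) (D j : ℕ) (h : D ≤ j) : gdiv σ c a' D j = 0 := by
  unfold gdiv
  rw [Nat.sub_eq_zero_of_le h]; rfl

lemma gdiv_succ (c : ℕ → F) (a' : F) (D j : ℕ) (h : j < D) :
    gdiv σ c a' D j = c (j + 1) + gdiv σ c a' D (j + 1) * (⇑σ)^[j + 1] a' := by
  unfold gdiv
  have h1 : D - j = (D - (j + 1)) + 1 := by omega
  have h2 : D - (D - (j + 1)) = j + 1 := by omega
  rw [h1, divAux, h2]

lemma c_eq (c : ℕ → F) (a' : F) (D j : ℕ) (h : j < D) :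
    c (j + 1) = gdiv σ c a' D j - gdiv σ c a' D (j + 1) * (⇑σ)^[j + 1] a' := by
  rw [gdiv_succ σ c a' D j h]; ring

/-- The division identity: `Phi_a(c)(x) = Phi_a(g)(σ(x)·a − a'·x) + r·x`. -/
lemma div_identity (c : ℕ → F) (a a' x : F) (D : ℕ) :
    Phi σ a c (D + 1) x
      = Phi σ a (gdiv σ c a' D) D (σ x * a - a' * x) + rdiv σ c a' D * x := by
  have opev0 : opev σ a x 0 = x := by simp [opev, genNorm]
  have key : ∀ j : ℕ, opev σ a (σ x * a - a' * x) j
      = opev σ a x (j + 1) - (⇑σ)^[j] a' * opev σ a x j := by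
    intro j
    have : (⇑σ)^[j] (σ x * a - a' * x)
        = (⇑σ)^[j + 1] x * (⇑σ)^[j] a - (⇑σ)^[j] a' * (⇑σ)^[j] x := by
      rw [iter_sub, iter_mul, iter_mul, ← Function.iterate_succ_apply]
    simp only [opev, this, genNorm]
    ring
  -- rewrite RHS
  have hR : Phi σ a (gdiv σ c a' D) D (σ x * a - a' * x)
      = (∑ j ∈ Finset.range D, gdiv σ c a' D j * opev σ a x (j + 1))
        - ∑ j ∈ Finset.range D, gdiv σ c a' D j * (⇑σ)^[j] a' * opev σ a x j := by
    simp only [Phi, key, mul_sub, ← Finset.sum_sub_distrib]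
    refine Finset.sum_congr rfl fun j _ => ?_
    ring
  -- second sum trick
  set h : ℕ → F := fun m => gdiv σ c a' D m * (⇑σ)^[m] a' * opev σ a x m with hh
  -- LHS decomposition
  have hL : Phi σ a c (D + 1) x
      = c 0 * x + ∑ j ∈ Finset.range D, c (j + 1) * opev σ a x (j + 1) := by
    rw [Phi, Finset.sum_range_succ']
    rw [opev0]; ring
  have hc : ∀ j ∈ Finset.range D, c (j + 1) * opev σ a x (j + 1)
      = gdiv σ c a' D j * opev σ a x (j + 1) - h (j + 1) := by
    intro j hj
    rw [c_eq σ c a' D j (Finset.mem_range.mp hj), hh]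
    simp only []
    ring
  have hsum : ∑ j ∈ Finset.range D, h (j + 1) = ∑ m ∈ Finset.range D, h m - h 0 := by
    have e1 := Finset.sum_range_succ' h D
    have e2 := Finset.sum_range_succ h D
    have e3 : h D = 0 := by
      rw [hh]; simp only []
      rw [gdiv_of_ge σ c a' D D le_rfl]; ring
    rw [e2, e3] at e1
    linear_combination -e1
  rw [hL, Finset.sum_congr rfl hc, Finset.sum_sub_distrib, hsum, hR, rdiv]
  have h0 : h 0 = gdiv σ c a' D 0 * a' * x := by
    rw [hh]; simp only [Function.iterate_zero, id_eq, opev0]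
  rw [h0]
  ring

end Division


section RankHelpers
open Submodule LinearMap Module
variable {K F : Type} [Field K] [Field F] [Algebra K F] [FiniteDimensional K F]

lemma finrank_le_of_le_comap (f : F →ₗ[K] F) (W V : Submodule K F)
    (h : V ≤ Submodule.comap f W) :
    finrank K V ≤ finrank K (LinearMap.ker f) + finrank K W := by
  refine (Submodule.finrank_mono h).trans ?_
  set C := Submodule.comap f W with hC
  have hrn := LinearMap.finrank_range_add_finrank_ker (f.domRestrict C)
  have hrange : finrank K (LinearMap.range (f.domRestrict C)) ≤ finrank K W := by
    refine Submodule.finrank_mono ?_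
    rw [LinearMap.range_domRestrict]
    exact Submodule.map_comap_le f W
  have hker : finrank K (LinearMap.ker (f.domRestrict C)) ≤ finrank K (LinearMap.ker f) := by
    rw [← Submodule.finrank_map_subtype_eq C (LinearMap.ker (f.domRestrict C))]
    refine Submodule.finrank_mono ?_
    rintro x ⟨⟨y, hy⟩, hyk, rfl⟩
    simpa [LinearMap.mem_ker] using hyk
  omega

lemma finrank_le_map_add_ker (f : F →ₗ[K] F) (V : Submodule K F) :
    finrank K V ≤ finrank K (Submodule.map f V) + finrank K (LinearMap.ker f) := by
  have hrn := LinearMap.finrank_range_add_finrank_ker (f.domRestrict V)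
  have hrange : finrank K (LinearMap.range (f.domRestrict V)) = finrank K (Submodule.map f V) := by
    rw [LinearMap.range_domRestrict]
  have hker : finrank K (LinearMap.ker (f.domRestrict V)) ≤ finrank K (LinearMap.ker f) := by
    rw [← Submodule.finrank_map_subtype_eq V (LinearMap.ker (f.domRestrict V))]
    refine Submodule.finrank_mono ?_
    rintro x ⟨⟨y, hy⟩, hyk, rfl⟩
    simpa [LinearMap.mem_ker] using hyk
  omega

end RankHelpers

section ZeroBound
open Submodule LinearMap Module Finset

variable {K F : Type} [Field K] [Field F] [Algebra K F] [FiniteDimensional K F]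
variable (σ : F ≃+* F)

lemma opev_zero_idx (a x : F) : opev σ a x 0 = x := by simp [opev, genNorm]

/-- Lam–Leroy zero bound: a nonzero operator polynomial of degree `≤ D` has total
kernel dimension at most `D` over pairwise non-conjugate nonzero evaluation points. -/
lemma zero_bound (hσK : ∀ k : K, σ (algebraMap K F k) = algebraMap K F k)
    (hfix : ∀ x : F, σ x = x ↔ x ∈ Set.range (algebraMap K F))
    {ℓ : ℕ} (aa : Fin ℓ → F) (ha0 : ∀ i, aa i ≠ 0)
    (haconj : ∀ i j : Fin ℓ, i ≠ j → ¬ SConj σ (aa i) (aa j)) :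
    ∀ (D : ℕ) (c : ℕ → F), (∃ m, m ≤ D ∧ c m ≠ 0) →
      ∑ i, finrank K (LinearMap.ker (Lmap σ hσK (aa i) c (D + 1))) ≤ D := by
  intro D
  induction D with
  | zero =>
    rintro c ⟨m, hm, hc⟩
    interval_cases m
    have hker : ∀ i, LinearMap.ker (Lmap σ hσK (aa i) c 1) = ⊥ := by
      intro i
      rw [LinearMap.ker_eq_bot']
      intro x hx
      simp only [Lmap_apply, Phi, Finset.sum_range_one, opev_zero_idx] at hx
      -- c 0 * x = 0
      rcases mul_eq_zero.mp hx with h | h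
      · exact absurd h hc
      · exact h
    exact le_of_eq (Finset.sum_eq_zero fun i _ => by rw [hker i, finrank_bot K F])
  | succ D ih =>
    rintro c hc
    by_cases hall : ∀ i, LinearMap.ker (Lmap σ hσK (aa i) c (D + 1 + 1)) = ⊥
    · exact le_trans (le_of_eq (Finset.sum_eq_zero fun i _ => by
        rw [hall i, finrank_bot K F])) (Nat.zero_le _)
    push_neg at hall
    obtain ⟨i0, hi0⟩ := hall
    obtain ⟨b, hbmem, hb0⟩ := (Submodule.ne_bot_iff _).mp hi0
    set a' : F := σ b * aa i0 * b⁻¹ with ha'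
    set g : ℕ → F := gdiv σ c a' (D + 1) with hg
    set r : F := rdiv σ c a' (D + 1) with hrdef
    have hid : ∀ a x : F, Phi σ a c (D + 2) x
        = Phi σ a g (D + 1) (σ x * a - a' * x) + r * x := fun a x =>
      div_identity σ c a a' x (D + 1)
    have hub : σ b * aa i0 - a' * b = 0 := by
      rw [ha']
      field_simp
      ring
    have hr : r = 0 := by
      have h0 : Phi σ (aa i0) c (D + 2) b = 0 := hbmem
      rw [hid (aa i0) b, hub, Phi_zero, zero_add] at h0
      exact (mul_eq_zero.mp h0).resolve_right hb0
    have hgne : ∃ j, j ≤ D ∧ g j ≠ 0 := by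
      by_contra hno
      push_neg at hno
      have hgall : ∀ j, g j = 0 := by
        intro j
        by_cases h : j ≤ D
        · exact hno j h
        · exact gdiv_of_ge σ c a' (D + 1) j (by omega)
      obtain ⟨m, hm, hcm⟩ := hc
      apply hcm
      cases m with
      | zero =>
        have : r = c 0 + g 0 * a' := rfl
        rw [hr, hgall 0] at this
        linear_combination -this
      | succ j =>
        rw [c_eq σ c a' (D + 1) j (by omega), ← hg, hgall j, hgall (j + 1)]
        ring
    have hsub : ∀ i, LinearMap.ker (Lmap σ hσK (aa i) c (D + 2))
        ≤ Submodule.comap (Umap σ hσK (aa i) a')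
            (LinearMap.ker (Lmap σ hσK (aa i) g (D + 1))) := by
      intro i x hx
      have hx' : Phi σ (aa i) c (D + 2) x = 0 := hx
      rw [hid (aa i) x, hr, zero_mul, add_zero] at hx'
      exact hx'
    have hbound : ∀ i, finrank K (LinearMap.ker (Lmap σ hσK (aa i) c (D + 2)))
        ≤ finrank K (LinearMap.ker (Umap σ hσK (aa i) a'))
          + finrank K (LinearMap.ker (Lmap σ hσK (aa i) g (D + 1))) :=
      fun i => finrank_le_of_le_comap _ _ _ (hsub i)
    have hU0 : ∀ i, i ≠ i0 → LinearMap.ker (Umap σ hσK (aa i) a') = ⊥ := by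
      intro i hi
      rw [LinearMap.ker_eq_bot']
      intro x hx
      by_contra hx0
      simp only [Umap_apply] at hx
      have hx1 : σ x * aa i = a' * x := by linear_combination hx
      apply haconj i i0 hi
      refine ⟨x * b⁻¹, by simp [hx0, hb0], ?_⟩
      -- aa i0 = σ (x * b⁻¹) * aa i * (x * b⁻¹)⁻¹
      rw [map_mul, map_inv₀]
      have hσb : σ b ≠ 0 := by simpa using hb0
      have hσx : σ x ≠ 0 := by simpa using hx0
      rw [ha'] at hx1
      calc aa i0 = aa i0 * (σ b * (σ b)⁻¹) * (b⁻¹ * b) * (x * x⁻¹) := by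
            rw [mul_inv_cancel₀ hσb, inv_mul_cancel₀ hb0, mul_inv_cancel₀ hx0]; ring
        _ = (σ b * aa i0 * b⁻¹ * x) * (σ b)⁻¹ * b * x⁻¹ := by ring
        _ = (σ x * aa i) * (σ b)⁻¹ * b * x⁻¹ := by rw [hx1]
        _ = σ x * (σ b)⁻¹ * aa i * (x * b⁻¹)⁻¹ := by rw [mul_inv, inv_inv]; ring
    have hU1 : finrank K (LinearMap.ker (Umap σ hσK (aa i0) a')) ≤ 1 := by
      have hle : LinearMap.ker (Umap σ hσK (aa i0) a') ≤ Submodule.span K {b} := by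
        intro x hx
        simp only [LinearMap.mem_ker, Umap_apply] at hx
        by_cases hx0 : x = 0
        · simp [hx0]
        have hfixx : σ (x * b⁻¹) = x * b⁻¹ := by
          rw [map_mul, map_inv₀]
          have : σ x * aa i0 = a' * x := by linear_combination hx
          rw [ha'] at this
          have hσb : σ b ≠ 0 := by simpa using hb0
          have hai : aa i0 ≠ 0 := ha0 i0
          have hai' := hai
          have h2 : σ x * b = σ b * x := by
            apply mul_left_cancel₀ hai
            field_simp at this
            rw [this]
          field_simp
          linear_combination h2
        obtain ⟨k, hk⟩ := (hfix _).mp hfixx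
        rw [Submodule.mem_span_singleton]
        refine ⟨k, ?_⟩
        rw [Algebra.smul_def, hk]
        field_simp
      refine (Submodule.finrank_mono hle).trans ?_
      rw [finrank_span_singleton hb0]
    have hsumU : ∑ i, finrank K (LinearMap.ker (Umap σ hσK (aa i) a')) ≤ 1 := by
      rw [Fintype.sum_eq_single i0 (fun i hi => by rw [hU0 i hi, finrank_bot])]
      exact hU1
    have hsumg : ∑ i, finrank K (LinearMap.ker (Lmap σ hσK (aa i) g (D + 1))) ≤ D :=
      ih g hgne
    calc ∑ i, finrank K (LinearMap.ker (Lmap σ hσK (aa i) c (D + 1 + 1)))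
        ≤ ∑ i, (finrank K (LinearMap.ker (Umap σ hσK (aa i) a'))
            + finrank K (LinearMap.ker (Lmap σ hσK (aa i) g (D + 1)))) :=
          Finset.sum_le_sum fun i _ => hbound i
      _ = (∑ i, finrank K (LinearMap.ker (Umap σ hσK (aa i) a')))
            + ∑ i, finrank K (LinearMap.ker (Lmap σ hσK (aa i) g (D + 1))) :=
          Finset.sum_add_distrib
      _ ≤ 1 + D := Nat.add_le_add hsumU hsumg
      _ = D + 1 := by omega

end ZeroBound

section MoreHelpers
variable {K F : Type} [Field K] [Field F] [Algebra K F] (σ : F ≃+* F)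

lemma iter_one (j : ℕ) : (⇑σ)^[j] (1 : F) = 1 := by
  induction j with
  | zero => simp
  | succ n ih => simp [Function.iterate_succ_apply, ih]

lemma iter_sum {ι : Type*} (u : ℕ) (s : Finset ι) (f : ι → F) :
    (⇑σ)^[u] (∑ x ∈ s, f x) = ∑ x ∈ s, (⇑σ)^[u] (f x) := by
  classical
  induction s using Finset.induction with
  | empty => simp [iter_zero]
  | insert _ _ hx ih => rw [Finset.sum_insert hx, Finset.sum_insert hx, iter_add, ih]

lemma genNorm_add (a : F) (u h : ℕ) :
    genNorm σ a (u + h) = (⇑σ)^[u] (genNorm σ a h) * genNorm σ a u := by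
  induction h with
  | zero => simp [genNorm, iter_one]
  | succ h ih =>
    have : u + (h + 1) = (u + h) + 1 := by omega
    rw [this]
    show (⇑σ)^[u + h] a * genNorm σ a (u + h) = _
    rw [ih, Function.iterate_add_apply]
    show (⇑σ)^[u] ((⇑σ)^[h] a) * ((⇑σ)^[u] (genNorm σ a h) * genNorm σ a u)
      = (⇑σ)^[u] ((⇑σ)^[h] a * genNorm σ a h) * genNorm σ a u
    rw [iter_mul]; ring

lemma opev_shift (a b c : F) (u h : ℕ) :
    opev σ a (c * opev σ a b h) u = (⇑σ)^[u] c * opev σ a b (u + h) := by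
  unfold opev
  rw [iter_mul, iter_mul, genNorm_add, ← Function.iterate_add_apply]
  ring

lemma opev_add (a x y : F) (m : ℕ) :
    opev σ a (x + y) m = opev σ a x m + opev σ a y m := by
  unfold opev; rw [iter_add]; ring

lemma opev_sum {ι : Type*} (a : F) (s : Finset ι) (f : ι → F) (m : ℕ) :
    opev σ a (∑ x ∈ s, f x) m = ∑ x ∈ s, opev σ a (f x) m := by
  unfold opev; rw [iter_sum, Finset.sum_mul]

end MoreHelpers


/-- If `rk_F(λ_{n−t−k}(E)_a⃗) = t`, then the Loidreau–Overbeck decoding matrix satisfies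
`rk_F(L) = n − 1`. -/
theorem LO_rank_eq
    {K F : Type} [Field K] [Field F] [Algebra K F] [Fintype K] [Fintype F]
    (σ : F ≃+* F)
    (hfix : ∀ x : F, σ x = x ↔ x ∈ Set.range (algebraMap K F))
    {ℓ : ℕ} (hℓ : 1 ≤ ℓ) (nn : Fin ℓ → ℕ) (aa : Fin ℓ → F)
    (ha0 : ∀ i, aa i ≠ 0)
    (haconj : ∀ i j : Fin ℓ, i ≠ j → ¬ SConj σ (aa i) (aa j))
    (β : (Σ i : Fin ℓ, Fin (nn i)) → F)
    (hβ : ∀ i, LinearIndependent K fun μ : Fin (nn i) => β ⟨i, μ⟩)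
    {s : ℕ} (hs : 1 ≤ s) {k n t : ℕ} (hn : n = ∑ i, nn i)
    (hk : 1 ≤ k) (hkn : k ≤ n)
    (M : Matrix (Fin s) (Fin k) F)
    (E R : Matrix (Fin s) (Σ i : Fin ℓ, Fin (nn i)) F)
    (hR : R = codeword σ nn aa β k M + E)
    (ht : wtM K nn E = t) (htnk : t ≤ n - k)
    (hrk : (mooreMat σ nn aa (n - t - k) E).rank = t)
    :
    (LOmat σ nn aa β R n t k).rank = n - 1 := by
  classical
  have hσK : ∀ kk : K, σ (algebraMap K F kk) = algebraMap K F kk :=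
    fun kk => (hfix _).mpr ⟨kk, rfl⟩
  have htk : t + k ≤ n := by omega
  set d1 : ℕ := n - t - 1 with hd1
  set d2 : ℕ := n - t - k with hd2
  set ρ : ℕ → ((Σ i : Fin ℓ, Fin (nn i)) → F) :=
    fun m p => opev σ (aa p.1) (β p) m with hρ
  set Erow : Fin s × Fin d2 → ((Σ i : Fin ℓ, Fin (nn i)) → F) :=
    fun ju p => opev σ (aa p.1) (E ju.1 p) (ju.2 : ℕ) with hErow
  set B : Submodule F ((Σ i : Fin ℓ, Fin (nn i)) → F) :=
    Submodule.span F (Set.range fun u : Fin d1 => ρ (u : ℕ)) with hB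
  set W : Submodule F ((Σ i : Fin ℓ, Fin (nn i)) → F) :=
    Submodule.span F (Set.range Erow) with hW
  -- row expansion of R
  have hrowR : ∀ (j : Fin s) (u : ℕ) (p : Σ i : Fin ℓ, Fin (nn i)),
      opev σ (aa p.1) (R j p) u
        = (∑ h : Fin k, (⇑σ)^[u] (M j h) * ρ ((u + h : ℕ)) p)
          + opev σ (aa p.1) (E j p) u := by
    intro j u p
    rw [hR]
    have hadd : (codeword σ nn aa β k M + E) j p = codeword σ nn aa β k M j p + E j p := rfl
    rw [hadd, opev_add]
    congr 1
    have hcw : codeword σ nn aa β k M j p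
        = ∑ h : Fin k, M j h * opev σ (aa p.1) (β p) (h : ℕ) := by
      simp [codeword, Matrix.mul_apply, moore]
    rw [hcw, opev_sum]
    refine Finset.sum_congr rfl fun h _ => ?_
    rw [opev_shift]
  -- the span of the rows of L is B ⊔ W
  have harith : ∀ (u : Fin d2) (h : Fin k), (u : ℕ) + (h : ℕ) < d1 := by
    intro u h
    have hu := u.2
    have hh := h.2
    omega
  have hrowdec : ∀ (j : Fin s) (u : Fin d2),
      LOmat σ nn aa β R n t k (Sum.inr (j, u))
        = (∑ h : Fin k, (⇑σ)^[(u : ℕ)] (M j h) • ρ ((u : ℕ) + (h : ℕ))) + Erow (j, u) := by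
    intro j u
    funext p
    have h1 : LOmat σ nn aa β R n t k (Sum.inr (j, u)) p
        = opev σ (aa p.1) (R j p) (u : ℕ) := rfl
    rw [h1, hrowR j u p]
    have h2 : ((∑ h : Fin k, (⇑σ)^[(u : ℕ)] (M j h) • ρ ((u : ℕ) + (h : ℕ)))
        + Erow (j, u)) p
        = (∑ h : Fin k, (⇑σ)^[(u : ℕ)] (M j h) * ρ ((u : ℕ) + (h : ℕ)) p)
          + opev σ (aa p.1) (E j p) (u : ℕ) := by
      rw [Pi.add_apply, Finset.sum_apply]
      rfl
    rw [h2]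
  have hspan : Submodule.span F (Set.range (LOmat σ nn aa β R n t k)) = B ⊔ W := by
    apply le_antisymm
    · rw [Submodule.span_le]
      rintro _ ⟨row, rfl⟩
      cases row with
      | inl u =>
        apply Submodule.mem_sup_left
        exact Submodule.subset_span ⟨u, rfl⟩
      | inr ju =>
        obtain ⟨j, u⟩ := ju
        rw [hrowdec j u]
        refine Submodule.add_mem _ ?_ ?_
        · apply Submodule.mem_sup_left
          refine Submodule.sum_mem _ fun h _ => Submodule.smul_mem _ _ ?_
          exact Submodule.subset_span ⟨⟨(u : ℕ) + (h : ℕ), harith u h⟩, rfl⟩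
        · apply Submodule.mem_sup_right
          exact Submodule.subset_span ⟨(j, u), rfl⟩
    · apply sup_le
      · rw [hB, Submodule.span_le]
        rintro _ ⟨u, rfl⟩
        exact Submodule.subset_span ⟨Sum.inl u, rfl⟩
      · rw [hW, Submodule.span_le]
        rintro _ ⟨ju, rfl⟩
        obtain ⟨j, u⟩ := ju
        have : Erow (j, u) = LOmat σ nn aa β R n t k (Sum.inr (j, u))
            - ∑ h : Fin k, (⇑σ)^[(u : ℕ)] (M j h) • ρ ((u : ℕ) + (h : ℕ)) := by
          rw [hrowdec j u]; ring
        rw [this]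
        refine Submodule.sub_mem _ (Submodule.subset_span ⟨Sum.inr (j, u), rfl⟩) ?_
        refine Submodule.sum_mem _ fun h _ => Submodule.smul_mem _ _ ?_
        exact Submodule.subset_span ⟨Sum.inl ⟨(u : ℕ) + (h : ℕ), harith u h⟩, rfl⟩
  -- finrank of B
  have hBrank : Module.finrank F B = d1 := by
    have hlin : LinearIndependent F (fun u : Fin d1 => ρ (u : ℕ)) := by
      rw [Fintype.linearIndependent_iff]
      intro g hg
      by_contra hne
      push_neg at hne
      obtain ⟨u0, hu0⟩ := hne
      have hd1pos : 0 < d1 := u0.pos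
      set cc : ℕ → F := fun m => if h : m < d1 then g ⟨m, h⟩ else 0 with hcc
      have hccval : ∀ u : Fin d1, cc (u : ℕ) = g u := by
        intro u
        rw [hcc]
        simp [u.2]
      have hccn : ∃ m, m ≤ d1 - 1 ∧ cc m ≠ 0 := by
        refine ⟨(u0 : ℕ), by have := u0.2; omega, ?_⟩
        rw [hccval u0]; exact hu0
      have hD1 : d1 - 1 + 1 = d1 := by omega
      have hker : ∀ i : Fin ℓ,
          Submodule.span K (Set.range fun μ : Fin (nn i) => β ⟨i, μ⟩)
            ≤ LinearMap.ker (Lmap σ hσK (aa i) cc (d1 - 1 + 1)) := by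
        intro i
        rw [Submodule.span_le]
        rintro _ ⟨μ, rfl⟩
        have hphi : Phi σ (aa i) cc d1 (β ⟨i, μ⟩)
            = ∑ u : Fin d1, g u • ρ (u : ℕ) ⟨i, μ⟩ := by
          rw [Phi, ← Fin.sum_univ_eq_sum_range
            (fun m => cc m * opev σ (aa i) (β ⟨i, μ⟩) m) d1]
          exact Finset.sum_congr rfl fun u _ => by rw [hccval u]; rfl
        have hz : (∑ u : Fin d1, g u • ρ (u : ℕ)) ⟨i, μ⟩ = 0 := by rw [hg]; rfl
        rw [Finset.sum_apply] at hz
        have : Phi σ (aa i) cc d1 (β ⟨i, μ⟩) = 0 := by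
          rw [hphi]
          simpa using hz
        show Lmap σ hσK (aa i) cc (d1 - 1 + 1) (β ⟨i, μ⟩) = 0
        rw [Lmap_apply, hD1]
        exact this
      have hdim : ∀ i : Fin ℓ, nn i
          ≤  Module.finrank K (LinearMap.ker (Lmap σ hσK (aa i) cc (d1 - 1 + 1))) := by
        intro i
        have h1 :  Module.finrank K (Submodule.span K
            (Set.range fun μ : Fin (nn i) => β ⟨i, μ⟩)) = nn i := by
          rw [finrank_span_eq_card (hβ i), Fintype.card_fin]
        rw [← h1]
        exact Submodule.finrank_mono (hker i)
      have hzb := zero_bound σ hσK hfix aa ha0 haconj (d1 - 1) cc hccn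
      have hnle : n ≤ d1 - 1 := by
        calc n = ∑ i, nn i := hn
          _ ≤ ∑ i,  Module.finrank K (LinearMap.ker (Lmap σ hσK (aa i) cc (d1 - 1 + 1))) :=
              Finset.sum_le_sum fun i _ => hdim i
          _ ≤ d1 - 1 := hzb
      omega
    rw [hB, finrank_span_eq_card hlin, Fintype.card_fin]
  -- finrank of W
  have hWrank : Module.finrank F W = t := by
    rw [hW, ← hrk, Matrix.rank_eq_finrank_span_row]
    rfl
  -- trivial intersection
  -- weight lower bound for nonzero elements of B
  have hwtB : ∀ v : (Σ i : Fin ℓ, Fin (nn i)) → F, v ∈ B → v ≠ 0 →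
      t + 1 ≤ ∑ i, Module.finrank K
        (Submodule.span K (Set.range fun μ : Fin (nn i) => v ⟨i, μ⟩)) := by
    intro v hv hv0
    rw [hB] at hv
    obtain ⟨cf, hcf⟩ := (Submodule.mem_span_range_iff_exists_fun F).mp hv
    have hcfne : ∃ u, cf u ≠ 0 := by
      by_contra hno
      push_neg at hno
      apply hv0
      rw [← hcf]
      simp [hno]
    obtain ⟨u0, hu0⟩ := hcfne
    have hd1pos : 0 < d1 := u0.pos
    have hD1 : d1 - 1 + 1 = d1 := by omega
    set cc : ℕ → F := fun m => if h : m < d1 then cf ⟨m, h⟩ else 0 with hcc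
    have hccval : ∀ u : Fin d1, cc (u : ℕ) = cf u := by
      intro u; rw [hcc]; simp [u.2]
    have hccn : ∃ m, m ≤ d1 - 1 ∧ cc m ≠ 0 := by
      refine ⟨(u0 : ℕ), by have := u0.2; omega, ?_⟩
      rw [hccval u0]; exact hu0
    have hval : ∀ (i : Fin ℓ) (μ : Fin (nn i)),
        v ⟨i, μ⟩ = Lmap σ hσK (aa i) cc (d1 - 1 + 1) (β ⟨i, μ⟩) := by
      intro i μ
      rw [Lmap_apply, hD1]
      have hphi : Phi σ (aa i) cc d1 (β ⟨i, μ⟩)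
          = ∑ u : Fin d1, cf u * ρ (u : ℕ) ⟨i, μ⟩ := by
        rw [Phi, ← Fin.sum_univ_eq_sum_range
          (fun m => cc m * opev σ (aa i) (β ⟨i, μ⟩) m) d1]
        exact Finset.sum_congr rfl fun u _ => by rw [hccval u]
      have hcfp := congrFun hcf ⟨i, μ⟩
      rw [Finset.sum_apply] at hcfp
      simp only [Pi.smul_apply, smul_eq_mul] at hcfp
      rw [hphi, hcfp]
    have hzb := zero_bound σ hσK hfix aa ha0 haconj (d1 - 1) cc hccn
    have hdim : ∀ i : Fin ℓ, nn i
        ≤ Module.finrank K (Submodule.span K (Set.range fun μ : Fin (nn i) => v ⟨i, μ⟩))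
          + Module.finrank K (LinearMap.ker (Lmap σ hσK (aa i) cc (d1 - 1 + 1))) := by
      intro i
      set Li := Lmap σ hσK (aa i) cc (d1 - 1 + 1) with hLi
      have hspanmap : Submodule.span K (Set.range fun μ : Fin (nn i) => v ⟨i, μ⟩)
          = Submodule.map Li (Submodule.span K (Set.range fun μ : Fin (nn i) => β ⟨i, μ⟩)) := by
        have hfn : (fun μ : Fin (nn i) => v ⟨i, μ⟩)
            = Li ∘ (fun μ : Fin (nn i) => β ⟨i, μ⟩) := funext fun μ => hval i μ
        rw [Submodule.map_span, ← Set.range_comp, ← hfn]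
      have h1 : Module.finrank K (Submodule.span K
          (Set.range fun μ : Fin (nn i) => β ⟨i, μ⟩)) = nn i := by
        rw [finrank_span_eq_card (hβ i), Fintype.card_fin]
      have h2 := finrank_le_map_add_ker Li
        (Submodule.span K (Set.range fun μ : Fin (nn i) => β ⟨i, μ⟩))
      rw [h1, ← hspanmap] at h2
      exact h2
    have hsum : n ≤ (∑ i, Module.finrank K
        (Submodule.span K (Set.range fun μ : Fin (nn i) => v ⟨i, μ⟩))) + (d1 - 1) := by
      calc n = ∑ i, nn i := hn
        _ ≤ ∑ i, (Module.finrank K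
              (Submodule.span K (Set.range fun μ : Fin (nn i) => v ⟨i, μ⟩))
            + Module.finrank K (LinearMap.ker (Lmap σ hσK (aa i) cc (d1 - 1 + 1)))) :=
            Finset.sum_le_sum fun i _ => hdim i
        _ = (∑ i, Module.finrank K
              (Submodule.span K (Set.range fun μ : Fin (nn i) => v ⟨i, μ⟩)))
            + ∑ i, Module.finrank K (LinearMap.ker (Lmap σ hσK (aa i) cc (d1 - 1 + 1))) :=
            Finset.sum_add_distrib
        _ ≤ _ := Nat.add_le_add_left hzb _
    omega
  -- weight upper bound for elements of W
  have hwtW : ∀ v : (Σ i : Fin ℓ, Fin (nn i)) → F, v ∈ W →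
      (∑ i, Module.finrank K
        (Submodule.span K (Set.range fun μ : Fin (nn i) => v ⟨i, μ⟩))) ≤ t := by
    intro v hv
    rw [hW] at hv
    obtain ⟨dc, hdc⟩ := (Submodule.mem_span_range_iff_exists_fun F).mp hv
    rw [← ht]
    refine Finset.sum_le_sum fun i _ => ?_
    -- block column space of E
    set colf : Fin (nn i) → (Fin s → F) := fun μ r => E r ⟨i, μ⟩ with hcolf
    set Vi : Submodule K (Fin s → F) := Submodule.span K (Set.range colf) with hVi
    have hti : rkqMat K (Matrix.of fun (r : Fin s) (μ : Fin (nn i)) => E r ⟨i, μ⟩)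
        = Module.finrank K Vi := rfl
    rw [hti]
    set bV := Module.finBasis K ↥Vi with hbV
    have hcolmem : ∀ μ, colf μ ∈ Vi := fun μ => Submodule.subset_span ⟨μ, rfl⟩
    set A : Fin (Module.finrank K ↥Vi) → (Fin s → F) := fun w => ((bV w : ↥Vi) : Fin s → F)
      with hA
    set kcf : Fin (nn i) → Fin (Module.finrank K ↥Vi) → K :=
      fun μ w => bV.repr ⟨colf μ, hcolmem μ⟩ w with hkcf
    have hexp : ∀ (μ : Fin (nn i)) (r : Fin s),
        E r ⟨i, μ⟩ = ∑ w, algebraMap K F (kcf μ w) * A w r := by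
      intro μ r
      have h0 := bV.sum_repr ⟨colf μ, hcolmem μ⟩
      have h1 : Vi.subtype (∑ w, bV.repr ⟨colf μ, hcolmem μ⟩ w • bV w) = colf μ := by
        rw [h0]; rfl
      rw [map_sum] at h1
      have h2 := congrFun h1 r
      rw [Finset.sum_apply] at h2
      rw [show E r ⟨i, μ⟩ = colf μ r from rfl, ← h2]
      refine Finset.sum_congr rfl fun w _ => ?_
      rw [map_smul]
      rw [Pi.smul_apply, Algebra.smul_def]
      rfl
    set dv : Fin (Module.finrank K ↥Vi) → F := fun w =>
      ∑ ju : Fin s × Fin d2, dc ju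
        * ((⇑σ)^[(ju.2 : ℕ)] (A w ju.1) * genNorm σ (aa i) (ju.2 : ℕ)) with hdv
    have hventry : ∀ μ : Fin (nn i), v ⟨i, μ⟩ = ∑ w, kcf μ w • dv w := by
      intro μ
      have h0 : v ⟨i, μ⟩ = ∑ ju : Fin s × Fin d2, dc ju
          * ((⇑σ)^[(ju.2 : ℕ)] (E ju.1 ⟨i, μ⟩) * genNorm σ (aa i) (ju.2 : ℕ)) := by
        rw [← hdc, Finset.sum_apply]
        refine Finset.sum_congr rfl fun ju _ => ?_
        rw [Pi.smul_apply, smul_eq_mul]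
        rfl
      rw [h0]
      have h1 : ∀ ju : Fin s × Fin d2, dc ju
          * ((⇑σ)^[(ju.2 : ℕ)] (E ju.1 ⟨i, μ⟩) * genNorm σ (aa i) (ju.2 : ℕ))
          = ∑ w, kcf μ w
              • (dc ju * ((⇑σ)^[(ju.2 : ℕ)] (A w ju.1) * genNorm σ (aa i) (ju.2 : ℕ))) := by
        intro ju
        rw [hexp μ ju.1, iter_sum, Finset.sum_mul, Finset.mul_sum]
        refine Finset.sum_congr rfl fun w _ => ?_
        rw [iter_mul, iter_algebraMap σ hσK, Algebra.smul_def]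
        ring
      rw [Finset.sum_congr rfl (fun ju _ => h1 ju), Finset.sum_comm]
      refine Finset.sum_congr rfl fun w _ => ?_
      rw [← Finset.smul_sum]
    have hble : Submodule.span K (Set.range fun μ : Fin (nn i) => v ⟨i, μ⟩)
        ≤ Submodule.span K (Set.range dv) := by
      rw [Submodule.span_le]
      rintro _ ⟨μ, rfl⟩
      show v ⟨i, μ⟩ ∈ _
      rw [hventry μ]
      exact Submodule.sum_mem _ fun w _ =>
        Submodule.smul_mem _ _ (Submodule.subset_span ⟨w, rfl⟩)
    refine (Submodule.finrank_mono hble).trans ?_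
    refine (finrank_span_le_card (R := K) (Set.range dv)).trans ?_
    rw [Set.toFinset_card]
    calc Fintype.card (Set.range dv) ≤ Fintype.card (Fin (Module.finrank K ↥Vi)) :=
          Fintype.card_range_le dv
      _ = Module.finrank K ↥Vi := Fintype.card_fin _
  have hBW : B ⊓ W = ⊥ := by
    rw [eq_bot_iff]
    intro v hv
    rw [Submodule.mem_bot]
    by_contra hv0
    have hmem := Submodule.mem_inf.mp hv
    have h1 := hwtB v hmem.1 hv0
    have h2 := hwtW v hmem.2
    omega
  rw [Matrix.rank_eq_finrank_span_row]
  rw [show Set.range (LOmat σ nn aa β R n t k).row = Set.range (LOmat σ nn aa β R n t k) from rfl]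
  rw [hspan]
  have := Submodule.finrank_sup_add_finrank_inf_eq B W
  rw [hBW, hBrank, hWrank] at this
  have hbot : Module.finrank F (⊥ : Submodule F ((Σ i : Fin ℓ, Fin (nn i)) → F)) = 0 :=
    finrank_bot F _
  omega


end Stmt5
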